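/- (Vanishing terminal stage cost as the horizon grows; the core of the paper's Section 4 Lemma.) Let x̄ ∈ ℝⁿ. Suppose there exist sequences (x_t)_{t∈ℕ}, (u_t)_{t∈ℕ} with x₀ = x̄, x_{t+1} = Ax_t + Bu_t, x_t ∈ 𝒳, u_t ∈ 𝒰 for all t, whose total cost ∑_{t=0}^{∞} ℓ(x_t,u_t) converges to a finite value M. Suppose moreover that for every horizon N ≥ 1 there is a pair (z^N, v^N), admissible for horizon N from x̄, that attains V_N(x̄). Then ℓ(z^N_{N−1}, v^N_{N−1}) → 0 as N → ∞. -/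

import Mathlib

open Matrix Finset

/-- The stage cost `ℓ(x,u) = ½(xᵀQx + uᵀRu)`. -/
noncomputable def stageCost {n m : ℕ} (Q : Matrix (Fin n) (Fin n) ℝ)
    (R : Matrix (Fin m) (Fin m) ℝ) (x : Fin n → ℝ) (u : Fin m → ℝ) : ℝ :=
  (1/2) * (x ⬝ᵥ Q *ᵥ x + u ⬝ᵥ R *ᵥ u)

/-- `ℓ*(x) = ½xᵀQx`, the minimal stage cost for fixed state `x`. -/
noncomputable def minStageCost {n : ℕ} (Q : Matrix (Fin n) (Fin n) ℝ)
    (x : Fin n → ℝ) : ℝ := (1/2) * (x ⬝ᵥ Q *ᵥ x)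

/-- `(z,v)` is admissible for horizon `N` from `x̄`: `z₀ = x̄`, the dynamics
`z_{τ+1} = Az_τ + Bv_τ` hold for `τ = 0,…,N−2`, `z_τ ∈ 𝒳` and `v_τ ∈ 𝒰` for
`τ = 0,…,N−1`. -/
def Admissible {n m : ℕ} (A : Matrix (Fin n) (Fin n) ℝ) (B : Matrix (Fin n) (Fin m) ℝ)
    (X : Set (Fin n → ℝ)) (U : Set (Fin m → ℝ)) (N : ℕ) (xbar : Fin n → ℝ)
    (z : ℕ → Fin n → ℝ) (v : ℕ → Fin m → ℝ) : Prop :=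
  z 0 = xbar ∧ (∀ τ, τ + 1 < N → z (τ + 1) = A *ᵥ z τ + B *ᵥ v τ) ∧
    (∀ τ < N, z τ ∈ X) ∧ (∀ τ < N, v τ ∈ U)

/-- The finite-horizon optimal value function
`V_N(x̄) = inf {∑_{τ<N} ℓ(z_τ,v_τ) : (z,v) admissible for horizon N from x̄}`. -/
noncomputable def valueFn {n m : ℕ} (A : Matrix (Fin n) (Fin n) ℝ)
    (B : Matrix (Fin n) (Fin m) ℝ) (Q : Matrix (Fin n) (Fin n) ℝ)
    (R : Matrix (Fin m) (Fin m) ℝ) (X : Set (Fin n → ℝ)) (U : Set (Fin m → ℝ))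
    (N : ℕ) (xbar : Fin n → ℝ) : ℝ :=
  sInf {r : ℝ | ∃ (z : ℕ → Fin n → ℝ) (v : ℕ → Fin m → ℝ),
    Admissible A B X U N xbar z v ∧ r = ∑ τ ∈ range N, stageCost Q R (z τ) (v τ)}

/-- Vanishing terminal stage cost as the horizon grows (core of the paper's
Section 4 Lemma): if from `x̄` there is an infinite admissible trajectory with
summable total cost, and for every horizon `N ≥ 1` the pair `(z^N,v^N)` is
admissible and attains `V_N(x̄)`, then `ℓ(z^N_{N−1},v^N_{N−1}) → 0` as `N → ∞`. -/
theorem terminal_stage_cost_tendsto_zero {n m : ℕ} (hn : 1 ≤ n) (hm : 1 ≤ m)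
    (A : Matrix (Fin n) (Fin n) ℝ) (B : Matrix (Fin n) (Fin m) ℝ)
    (Q : Matrix (Fin n) (Fin n) ℝ) (hQ : Q.PosDef)
    (R : Matrix (Fin m) (Fin m) ℝ) (hR : R.PosDef)
    (X : Set (Fin n → ℝ)) (U : Set (Fin m → ℝ)) (hU0 : (0 : Fin m → ℝ) ∈ U)
    (xbar : Fin n → ℝ)
    (x : ℕ → Fin n → ℝ) (u : ℕ → Fin m → ℝ)
    (hx0 : x 0 = xbar)
    (hdyn : ∀ t : ℕ, x (t + 1) = A *ᵥ x t + B *ᵥ u t)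
    (hxX : ∀ t : ℕ, x t ∈ X) (huU : ∀ t : ℕ, u t ∈ U)
    (hsum : Summable (fun t => stageCost Q R (x t) (u t)))
    (z : ℕ → ℕ → Fin n → ℝ) (v : ℕ → ℕ → Fin m → ℝ)
    (hadm : ∀ N : ℕ, 1 ≤ N → Admissible A B X U N xbar (z N) (v N))
    (hopt : ∀ N : ℕ, 1 ≤ N →
      valueFn A B Q R X U N xbar = ∑ τ ∈ range N, stageCost Q R (z N τ) (v N τ)) :
    Filter.Tendsto (fun N => stageCost Q R (z N (N - 1)) (v N (N - 1)))
      Filter.atTop (nhds 0) := by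

  classical
  set W : ℕ → ℝ := fun N => valueFn A B Q R X U N xbar with hW
  have hcost : ∀ (a : Fin n → ℝ) (b : Fin m → ℝ), 0 ≤ stageCost Q R a b := by
    intro a b
    have h1 : 0 ≤ a ⬝ᵥ Q *ᵥ a := by simpa using hQ.posSemidef.dotProduct_mulVec_nonneg a
    have h2 : 0 ≤ b ⬝ᵥ R *ᵥ b := by simpa using hR.posSemidef.dotProduct_mulVec_nonneg b
    unfold stageCost
    positivity
  -- the sets defining V are bounded below by 0
  have hbdd : ∀ N : ℕ, BddBelow {r : ℝ | ∃ (z' : ℕ → Fin n → ℝ) (v' : ℕ → Fin m → ℝ),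
      Admissible A B X U N xbar z' v' ∧ r = ∑ τ ∈ range N, stageCost Q R (z' τ) (v' τ)} := by
    intro N
    refine ⟨0, ?_⟩
    rintro r ⟨z', v', _, rfl⟩
    exact Finset.sum_nonneg fun τ _ => hcost _ _
  have hle : ∀ (N : ℕ) (z' : ℕ → Fin n → ℝ) (v' : ℕ → Fin m → ℝ),
      Admissible A B X U N xbar z' v' →
      W N ≤ ∑ τ ∈ range N, stageCost Q R (z' τ) (v' τ) :=
    fun N z' v' h => csInf_le (hbdd N) ⟨z', v', h, rfl⟩
  -- admissibility is antitone in the horizon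
  have hmono : ∀ (N M : ℕ) (z' : ℕ → Fin n → ℝ) (v' : ℕ → Fin m → ℝ), N ≤ M →
      Admissible A B X U M xbar z' v' → Admissible A B X U N xbar z' v' := by
    rintro N M z' v' hNM ⟨h0, h1, h2, h3⟩
    exact ⟨h0, fun τ hτ => h1 τ (lt_of_lt_of_le hτ hNM),
      fun τ hτ => h2 τ (lt_of_lt_of_le hτ hNM), fun τ hτ => h3 τ (lt_of_lt_of_le hτ hNM)⟩
  -- W is monotone
  have hWmono : Monotone W := by
    apply monotone_nat_of_le_succ
    intro N
    have hadmN : Admissible A B X U N xbar (z (N+1)) (v (N+1)) :=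
      hmono N (N+1) _ _ (Nat.le_succ N) (hadm (N+1) (Nat.le_add_left 1 N))
    calc W N ≤ ∑ τ ∈ range N, stageCost Q R (z (N+1) τ) (v (N+1) τ) := hle N _ _ hadmN
      _ ≤ ∑ τ ∈ range (N+1), stageCost Q R (z (N+1) τ) (v (N+1) τ) := by
          rw [Finset.sum_range_succ]
          exact le_add_of_nonneg_right (hcost _ _)
      _ = W (N+1) := (hopt (N+1) (Nat.le_add_left 1 N)).symm
  -- W is bounded above by the total cost of the infinite trajectory
  have hWbdd : ∀ N : ℕ, W N ≤ ∑' t, stageCost Q R (x t) (u t) := by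
    intro N
    have hadmx : Admissible A B X U N xbar x u :=
      ⟨hx0, fun τ _ => hdyn τ, fun τ _ => hxX τ, fun τ _ => huU τ⟩
    calc W N ≤ ∑ τ ∈ range N, stageCost Q R (x τ) (u τ) := hle N _ _ hadmx
      _ ≤ ∑' t, stageCost Q R (x t) (u t) :=
          Summable.sum_le_tsum (range N) (fun i _ => hcost _ _) hsum
  -- W converges
  obtain ⟨L, hL⟩ : ∃ L, Filter.Tendsto W Filter.atTop (nhds L) :=
    ⟨_, tendsto_atTop_ciSup hWmono ⟨_, fun r ⟨N, hN⟩ => hN ▸ hWbdd N⟩⟩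
  have hL' : Filter.Tendsto (fun N => W (N - 1)) Filter.atTop (nhds L) :=
    hL.comp (Filter.tendsto_sub_atTop_nat 1)
  have hdiff : Filter.Tendsto (fun N => W N - W (N - 1)) Filter.atTop (nhds 0) := by
    simpa using hL.sub hL'
  -- squeeze
  apply squeeze_zero' (g := fun N => W N - W (N - 1)) ?_ ?_ hdiff
  · filter_upwards with N using hcost _ _
  · filter_upwards [Filter.eventually_ge_atTop 1] with N hN
    have hN1 : N - 1 + 1 = N := Nat.succ_pred_eq_of_pos hN
    have hsplit : W N = (∑ τ ∈ range (N - 1), stageCost Q R (z N τ) (v N τ))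
        + stageCost Q R (z N (N - 1)) (v N (N - 1)) := by
      rw [show W N = valueFn A B Q R X U N xbar from rfl, hopt N hN, ← hN1,
        Finset.sum_range_succ, hN1]
    have hadmN : Admissible A B X U (N - 1) xbar (z N) (v N) :=
      hmono (N - 1) N _ _ (Nat.sub_le N 1) (hadm N hN)
    have := hle (N - 1) _ _ hadmN
    linarith
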